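/- arXiv:1402.1004 — 5 statements merged into one kernel-verified Lean document; each statement's English description precedes it below -/
import Mathlib

section
/- For all complex s, q, w with -q not a nonpositive integer, the confluent hypergeometric function satisfies Kummer's transformation: ₁F₁(s; q; w) = exp(w) · ₁F₁(q - s; q; -w). -/
open Complex

/-- Pochhammer symbol (rising factorial) for a complex parameter. -/
noncomputable def pochC (a : ℂ) (n : ℕ) : ℂ := ∏ i ∈ Finset.range n, (a + i)

/-- Kummer confluent hypergeometric function ₁F₁ (complex). -/
noncomputable def hyp1F1C (s q w : ℂ) : ℂ :=
  ∑' l : ℕ, pochC s l / (pochC q l * (Nat.factorial l)) * w ^ l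

lemma pochC_succ (a : ℂ) (n : ℕ) : pochC a (n + 1) = pochC a n * (a + n) :=
  Finset.prod_range_succ _ _

lemma pochC_succ' (a : ℂ) (n : ℕ) : pochC a (n + 1) = a * pochC (a + 1) n := by
  rw [pochC, pochC, Finset.prod_range_succ', mul_comm]
  congr 1
  · simp
  · exact Finset.prod_congr rfl fun i _ => by push_cast; ring

lemma pochC_ne_zero {q : ℂ} (hq : ∀ n : ℕ, q ≠ -(n : ℂ)) (n : ℕ) : pochC q n ≠ 0 := by
  rw [pochC, Finset.prod_ne_zero_iff]
  intro i _ h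
  exact hq i (by linear_combination h)

/-- Auxiliary summand for the Chu–Vandermonde-type identity. -/
noncomputable def kummerK (q s : ℂ) (c u l : ℕ) : ℂ :=
  (-1 : ℂ) ^ l * (c.choose l) * pochC (q - s) l * ∏ i ∈ Finset.Ico l u, (q + i)

lemma prod_Ico_shift (q : ℂ) (l n : ℕ) :
    ∏ i ∈ Finset.Ico (l + 1) (n + 1), (q + i) = ∏ i ∈ Finset.Ico l n, (q + 1 + i) := by
  rw [Finset.prod_Ico_eq_prod_range, Finset.prod_Ico_eq_prod_range]
  simp only [Nat.add_sub_add_right, Nat.succ_sub_succ]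
  exact Finset.prod_congr rfl fun i _ => by push_cast; ring

/-- The key finite combinatorial identity (Chu–Vandermonde type). -/
lemma kummer_key (n : ℕ) : ∀ q s : ℂ,
    ∑ l ∈ Finset.range (n + 1), kummerK q s n n l = pochC s n := by
  induction n with
  | zero => intro q s; simp [kummerK, pochC]
  | succ n ih =>
    intro q s
    rw [Finset.sum_range_succ']
    have hterm : ∀ l ∈ Finset.range (n + 1),
        kummerK q s (n + 1) (n + 1) (l + 1)
        = (kummerK q s n (n + 1) (l + 1) - kummerK q s n (n + 1) l)
          + s * ((-1 : ℂ) ^ l * (n.choose l) * pochC (q - s) l *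
              ∏ i ∈ Finset.Ico (l + 1) (n + 1), (q + i)) := by
      intro l hl
      rw [Finset.mem_range] at hl
      simp only [kummerK]
      rw [Finset.prod_eq_prod_Ico_succ_bot hl (fun i : ℕ => (q + i)),
        pochC_succ, Nat.choose_succ_succ]
      push_cast
      ring
    rw [Finset.sum_congr rfl hterm, Finset.sum_add_distrib,
      Finset.sum_range_sub (kummerK q s n (n + 1)) (n + 1), ← Finset.mul_sum]
    have h1 : kummerK q s n (n + 1) (n + 1) = 0 := by
      simp [kummerK, Nat.choose_succ_self]
    have h2 : kummerK q s (n + 1) (n + 1) 0 = kummerK q s n (n + 1) 0 := by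
      simp [kummerK]
    have hT : ∑ l ∈ Finset.range (n + 1), ((-1 : ℂ) ^ l * (n.choose l) * pochC (q - s) l *
        ∏ i ∈ Finset.Ico (l + 1) (n + 1), (q + i)) = pochC (s + 1) n := by
      rw [← ih (q + 1) (s + 1)]
      refine Finset.sum_congr rfl fun l hl => ?_
      simp only [kummerK]
      have h3 : q + 1 - (s + 1) = q - s := by ring
      rw [h3, prod_Ico_shift]
    rw [h1, h2, hT, pochC_succ']
    ring

/-- The coefficient identity for Kummer's transformation. -/
lemma kummer_coeff {q : ℂ} (hq : ∀ n : ℕ, q ≠ -(n : ℂ)) (s : ℂ) (n : ℕ) :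
    ∑ l ∈ Finset.range (n + 1),
      (-1 : ℂ) ^ l * pochC (q - s) l /
        (pochC q l * (Nat.factorial l : ℂ) * (Nat.factorial (n - l) : ℂ))
    = pochC s n / (pochC q n * (Nat.factorial n : ℂ)) := by
  have hqn : (pochC q n * (Nat.factorial n : ℂ)) ≠ 0 :=
    mul_ne_zero (pochC_ne_zero hq n) (by exact_mod_cast Nat.factorial_ne_zero n)
  rw [eq_div_iff hqn, Finset.sum_mul, ← kummer_key n q s]
  refine Finset.sum_congr rfl fun l hl => ?_
  rw [Finset.mem_range, Nat.lt_succ_iff] at hl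
  have hfact : (Nat.factorial n : ℂ)
      = (n.choose l : ℂ) * (Nat.factorial l : ℂ) * (Nat.factorial (n - l) : ℂ) := by
    rw [← Nat.choose_mul_factorial_mul_factorial hl]; push_cast; ring
  have hprod : pochC q n = pochC q l * ∏ i ∈ Finset.Ico l n, (q + i) :=
    (Finset.prod_range_mul_prod_Ico _ hl).symm
  rw [kummerK, hfact, hprod]
  have h1 : pochC q l ≠ 0 := pochC_ne_zero hq l
  have h2 : (Nat.factorial l : ℂ) ≠ 0 := by exact_mod_cast Nat.factorial_ne_zero l
  have h3 : (Nat.factorial (n - l) : ℂ) ≠ 0 := by exact_mod_cast Nat.factorial_ne_zero (n - l)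
  field_simp

/-- Absolute summability of the ₁F₁ series. -/
lemma summable_norm_hyp {q : ℂ} (hq : ∀ n : ℕ, q ≠ -(n : ℂ)) (s w : ℂ) :
    Summable (fun n : ℕ => ‖pochC s n / (pochC q n * (Nat.factorial n : ℂ)) * w ^ n‖) := by
  set a : ℕ → ℂ := fun n => pochC s n / (pochC q n * (Nat.factorial n : ℂ)) * w ^ n with ha
  refine summable_of_ratio_norm_eventually_le (r := 1 / 2) (by norm_num) ?_
  simp only [norm_norm]
  have hbig : ∀ᶠ n : ℕ in Filter.atTop, (‖s‖ + 2 * ‖q‖ + 8 * ‖w‖ + 2 : ℝ) ≤ n :=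
    tendsto_natCast_atTop_atTop.eventually_ge_atTop _
  filter_upwards [hbig] with n hn
  have hrec : a (n + 1) = a n * ((s + n) * w / ((q + n) * ((n : ℂ) + 1))) := by
    have h1 : pochC q n ≠ 0 := pochC_ne_zero hq n
    have h2 : (q + n) ≠ 0 := fun h => hq n (by linear_combination h)
    have h3 : (Nat.factorial n : ℂ) ≠ 0 := by exact_mod_cast Nat.factorial_ne_zero n
    have h4 : ((n : ℂ) + 1) ≠ 0 := by
      have := Nat.cast_add_one_ne_zero (R := ℂ) n
      exact_mod_cast this
    simp only [ha, pochC_succ, Nat.factorial_succ]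
    push_cast
    field_simp
    ring
  show ‖a (n + 1)‖ ≤ 1 / 2 * ‖a n‖
  rw [hrec, norm_mul, mul_comm (‖a n‖)]
  have hnorm : ‖(s + n) * w / ((q + n) * ((n : ℂ) + 1))‖
      = ‖s + n‖ * ‖w‖ / (‖q + n‖ * ‖(n : ℂ) + 1‖) := by
    rw [norm_div, norm_mul, norm_mul]
  have hn1 : ‖(n : ℂ) + 1‖ = (n : ℝ) + 1 := by
    rw [show ((n : ℂ) + 1) = ((n + 1 : ℕ) : ℂ) by push_cast; ring, Complex.norm_natCast]
    push_cast; ring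
  have hs : ‖s + n‖ ≤ ‖s‖ + n := by
    refine (norm_add_le _ _).trans ?_
    rw [Complex.norm_natCast]
  have hqn : (n : ℝ) - ‖q‖ ≤ ‖q + n‖ := by
    have h := norm_sub_norm_le ((n : ℂ)) (-q)
    rw [Complex.norm_natCast, norm_neg, sub_neg_eq_add, add_comm] at h
    exact h
  have hq0 : (0 : ℝ) ≤ ‖q‖ := norm_nonneg q
  have hs0 : (0 : ℝ) ≤ ‖s‖ := norm_nonneg s
  have hw0 : (0 : ℝ) ≤ ‖w‖ := norm_nonneg w
  have hden : 0 < ‖q + n‖ * ((n : ℝ) + 1) := by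
    have : (0 : ℝ) < ‖q + n‖ := by nlinarith
    nlinarith
  rw [hnorm, hn1]
  refine mul_le_mul_of_nonneg_right ?_ (norm_nonneg _)
  rw [div_le_iff₀ hden]
  nlinarith [mul_le_mul_of_nonneg_right hs hw0, norm_nonneg (s + n),
    mul_le_mul_of_nonneg_right hqn (le_of_lt (show (0:ℝ) < (n:ℝ)+1 by nlinarith))]

/-- Kummer's transformation: ₁F₁(s; q; w) = e^w ₁F₁(q - s; q; -w), provided
that `-q` is not a nonpositive integer (i.e. `q` is not `0, -1, -2, ...`). -/
theorem kummer_transformation (s q w : ℂ) (hq : ∀ n : ℕ, q ≠ -(n : ℂ)) :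
    hyp1F1C s q w = Complex.exp w * hyp1F1C (q - s) q (-w) := by
  have hexp : Complex.exp w = ∑' n : ℕ, w ^ n / (Nat.factorial n : ℂ) := by
    rw [Complex.exp_eq_exp_ℂ, NormedSpace.exp_eq_tsum_div]
  have hexpsum : Summable (fun n : ℕ => ‖w ^ n / (Nat.factorial n : ℂ)‖) := by
    refine (Real.summable_pow_div_factorial ‖w‖).congr fun n => ?_
    rw [norm_div, norm_pow, Complex.norm_natCast]
  have hbsum : Summable (fun n : ℕ =>
      ‖pochC (q - s) n / (pochC q n * (Nat.factorial n : ℂ)) * (-w) ^ n‖) :=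
    summable_norm_hyp hq (q - s) (-w)
  rw [hyp1F1C, hyp1F1C, hexp,
    tsum_mul_tsum_eq_tsum_sum_range_of_summable_norm hexpsum hbsum]
  refine tsum_congr fun n => ?_
  rw [← Finset.sum_range_reflect]
  have hstep : ∀ l ∈ Finset.range (n + 1),
      w ^ (n + 1 - 1 - l) / (Nat.factorial (n + 1 - 1 - l) : ℂ) *
        (pochC (q - s) (n - (n + 1 - 1 - l)) /
          (pochC q (n - (n + 1 - 1 - l)) * (Nat.factorial (n - (n + 1 - 1 - l)) : ℂ)) *
          (-w) ^ (n - (n + 1 - 1 - l)))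
      = ((-1 : ℂ) ^ l * pochC (q - s) l /
          (pochC q l * (Nat.factorial l : ℂ) * (Nat.factorial (n - l) : ℂ))) * w ^ n := by
    intro l hl
    rw [Finset.mem_range, Nat.lt_succ_iff] at hl
    have he1 : n + 1 - 1 - l = n - l := by omega
    have he2 : n - (n - l) = l := by omega
    rw [he1, he2]
    have hw : w ^ (n - l) * w ^ l = w ^ n := by
      rw [← pow_add, Nat.sub_add_cancel hl]
    have h1 : pochC q l ≠ 0 := pochC_ne_zero hq l
    have h2 : (Nat.factorial l : ℂ) ≠ 0 := by exact_mod_cast Nat.factorial_ne_zero l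
    have h3 : (Nat.factorial (n - l) : ℂ) ≠ 0 := by
      exact_mod_cast Nat.factorial_ne_zero (n - l)
    rw [neg_pow, ← hw]
    field_simp
  rw [Finset.sum_congr rfl hstep, ← Finset.sum_mul, kummer_coeff hq s n]
end

section
/- For parameters a, d with -a and -d not nonpositive integers, and all real (or complex) w, z: Ψ₂(a; d, a; w, z) = exp(w + z) · Φ₃(d − a; d; −w, w·z). -/
open Real MeasureTheory Filter

/-- Pochhammer symbol (rising factorial) for a real parameter. -/
noncomputable def poch (a : ℝ) (n : ℕ) : ℝ := ∏ i ∈ Finset.range n, (a + i)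

/-- Modified Bessel function of the first kind of real order. -/
noncomputable def besselI (ν x : ℝ) : ℝ :=
  ∑' k : ℕ, (x / 2) ^ (2 * (k : ℝ) + ν) / (Real.Gamma (ν + k + 1) * (Nat.factorial k))

/-- Generalized Marcum Q function of real order. -/
noncomputable def marcumQ (M α β : ℝ) : ℝ :=
  α ^ (1 - M) *
    ∫ x in Set.Ioi β, x ^ M * Real.exp (-(α ^ 2 + x ^ 2) / 2) * besselI (M - 1) (α * x)

/-- Confluent hypergeometric function of two variables Φ₃. -/
noncomputable def phi3 (b g w z : ℝ) : ℝ :=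
  ∑' q : ℕ × ℕ,
    poch b q.1 / (poch g (q.1 + q.2) * (Nat.factorial q.1) * (Nat.factorial q.2)) *
      w ^ q.1 * z ^ q.2

/-- Confluent hypergeometric function of two variables Ψ₂. -/
noncomputable def psi2 (a d d' w z : ℝ) : ℝ :=
  ∑' q : ℕ × ℕ,
    poch a (q.1 + q.2) / (poch d q.1 * poch d' q.2 * (Nat.factorial q.1) * (Nat.factorial q.2)) *
      w ^ q.1 * z ^ q.2

/-- Kummer confluent hypergeometric function ₁F₁ (real). -/
noncomputable def hyp1F1 (a b z : ℝ) : ℝ :=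
  ∑' l : ℕ, poch a l / (poch b l * (Nat.factorial l)) * z ^ l

lemma poch_zero (a : ℝ) : poch a 0 = 1 := rfl

lemma poch_succ (a : ℝ) (n : ℕ) : poch a (n + 1) = poch a n * (a + n) :=
  Finset.prod_range_succ _ _

lemma poch_add (a : ℝ) (m n : ℕ) : poch a (m + n) = poch a m * poch (a + m) n := by
  unfold poch
  rw [Finset.prod_range_add]
  congr 1
  refine Finset.prod_congr rfl fun i _ => ?_
  push_cast
  ring

lemma poch_succ' (a : ℝ) (n : ℕ) : poch a (n + 1) = a * poch (a + 1) n := by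
  have := poch_add a 1 n
  simp only [poch, Finset.prod_range_one] at this ⊢
  rw [add_comm 1 n] at this
  simpa using this

lemma poch_ne_zero {a : ℝ} (ha : ∀ n : ℕ, a ≠ -(n : ℝ)) (n : ℕ) : poch a n ≠ 0 := by
  unfold poch
  refine Finset.prod_ne_zero_iff.mpr fun i _ => ?_
  have := ha i
  intro h
  exact this (by linarith)

/-- Key Vandermonde-type identity. -/
lemma vandermonde (x : ℝ) : ∀ (K : ℕ) (y : ℝ),
    ∑ m ∈ Finset.range (K + 1),
      (-1 : ℝ) ^ m * (K.choose m) * poch x m * poch (y + m) (K - m) = poch (y - x) K := by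
  intro K
  induction K with
  | zero => intro y; simp [poch_zero]
  | succ K ih =>
    intro y
    have hsplit : ∑ m ∈ Finset.range (K + 2),
        (-1 : ℝ) ^ m * ((K+1).choose m) * poch x m * poch (y + m) (K + 1 - m)
        = (∑ m ∈ Finset.range (K + 2),
            (-1 : ℝ) ^ m * (K.choose m) * poch x m * poch (y + m) (K + 1 - m))
          + ∑ m ∈ Finset.range (K + 1),
            (-1 : ℝ) ^ (m+1) * (K.choose m) * poch x (m+1) * poch (y + (m+1 : ℕ)) (K - m) := by
      rw [Finset.sum_range_succ' (fun m => (-1 : ℝ) ^ m * ((K+1).choose m) * poch x m * poch (y + m) (K + 1 - m)) (K+1)]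
      rw [Finset.sum_range_succ' (fun m => (-1 : ℝ) ^ m * ((K).choose m) * poch x m * poch (y + m) (K + 1 - m)) (K+1)]
      rw [add_right_comm]
      congr 1
      · rw [← Finset.sum_add_distrib]
        refine Finset.sum_congr rfl fun k _ => ?_
        simp only [Nat.choose_succ_succ, Nat.succ_sub_succ]
        push_cast
        ring
      · simp
    rw [hsplit]
    have hlast : ∑ m ∈ Finset.range (K + 2),
        (-1 : ℝ) ^ m * (K.choose m) * poch x m * poch (y + m) (K + 1 - m)
        = ∑ m ∈ Finset.range (K + 1),
            (-1 : ℝ) ^ m * (K.choose m) * poch x m * poch (y + m) (K + 1 - m) := by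
      rw [Finset.sum_range_succ]
      simp
    rw [hlast, ← Finset.sum_add_distrib]
    have hcomb : ∑ m ∈ Finset.range (K + 1),
        ((-1 : ℝ) ^ m * (K.choose m) * poch x m * poch (y + m) (K + 1 - m)
          + (-1 : ℝ) ^ (m+1) * (K.choose m) * poch x (m+1) * poch (y + (m+1 : ℕ)) (K - m))
        = (y - x) * ∑ m ∈ Finset.range (K + 1),
            (-1 : ℝ) ^ m * (K.choose m) * poch x m * poch ((y+1) + m) (K - m) := by
      rw [Finset.mul_sum]
      refine Finset.sum_congr rfl fun m hm => ?_
      have hmK : m ≤ K := Nat.lt_succ_iff.mp (Finset.mem_range.mp hm)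
      have h1 : K + 1 - m = (K - m) + 1 := by omega
      rw [h1, poch_succ' (y + m) (K - m), poch_succ x m]
      have h2 : (y : ℝ) + (m+1 : ℕ) = (y + m) + 1 := by push_cast; ring
      have h3 : (y + 1 : ℝ) + m = (y + m) + 1 := by ring
      rw [h2, h3]
      ring
    rw [hcomb, ih (y+1)]
    have : (y + 1 - x) = (y - x) + 1 := by ring
    rw [this, ← poch_succ']

lemma poch_neg_mul_factorial (l : ℕ) : ∀ n ≤ l,
    ((-1 : ℝ)) ^ n * poch (-(l : ℝ)) n * ((l - n).factorial : ℝ) = (l.factorial : ℝ) := by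
  intro n
  induction n with
  | zero => simp [poch_zero]
  | succ n ih =>
    intro h
    have hn : n ≤ l := Nat.le_of_succ_le h
    have h1 : l - n = (l - (n+1)) + 1 := by omega
    rw [poch_succ]
    have h2 : ((-1 : ℝ)) ^ (n+1) * (poch (-(l:ℝ)) n * (-(l:ℝ) + n)) * ((l - (n+1)).factorial : ℝ)
        = ((-1 : ℝ)) ^ n * poch (-(l:ℝ)) n * (((l:ℝ) - n) * ((l - (n+1)).factorial : ℝ)) := by
      ring
    rw [h2]
    have h3 : ((l:ℝ) - n) * ((l - (n+1)).factorial : ℝ) = ((l - n).factorial : ℝ) := by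
      rw [h1, Nat.factorial_succ]
      push_cast [h1]
      have : ((l : ℝ) - n) = ((l - (n+1) : ℕ) : ℝ) + 1 := by
        have := Nat.cast_sub (by omega : n + 1 ≤ l) (R := ℝ)
        push_cast at this ⊢
        linarith
      rw [this]
    rw [h3]
    exact ih hn

lemma poch_neg_eq_zero {l n : ℕ} (h : l < n) : poch (-(l : ℝ)) n = 0 := by
  unfold poch
  refine Finset.prod_eq_zero (Finset.mem_range.mpr h) ?_
  simp

lemma coeff_sum (a d : ℝ) (ha : ∀ n : ℕ, a ≠ -(n : ℝ)) (hd : ∀ n : ℕ, d ≠ -(n : ℝ))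
    (k l : ℕ) :
    ∑ n ∈ Finset.range (l + 1), ∑ m ∈ Finset.range (k + 1 - n),
      (-1 : ℝ) ^ m * poch (d - a) m /
        (poch d (m + n) * m.factorial * n.factorial * (k - m - n).factorial *
          (l - n).factorial)
      = poch a (k + l) / (poch d k * poch a l * k.factorial * l.factorial) := by
  have hfac : ∀ j : ℕ, ((j.factorial : ℝ)) ≠ 0 := fun j => by
    exact_mod_cast j.factorial_ne_zero
  have hpd : ∀ j : ℕ, poch d j ≠ 0 := poch_ne_zero hd
  have hpa : ∀ j : ℕ, poch a j ≠ 0 := poch_ne_zero ha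
  -- Step 1: inner sums
  have step1 : ∀ n ≤ l, ∑ m ∈ Finset.range (k + 1 - n),
      (-1 : ℝ) ^ m * poch (d - a) m /
        (poch d (m + n) * m.factorial * n.factorial * (k - m - n).factorial *
          (l - n).factorial)
      = ((k.choose n : ℝ) * ((-1 : ℝ) ^ n * poch (-(l : ℝ)) n) * poch (a + n) (k - n)) /
          (poch d k * k.factorial * l.factorial) := by
    intro n hnl
    rcases le_or_gt n k with hnk | hnk
    · have hrange : k + 1 - n = (k - n) + 1 := by omega
      rw [hrange]
      have hterm : ∀ m ∈ Finset.range ((k - n) + 1),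
          (-1 : ℝ) ^ m * poch (d - a) m /
            (poch d (m + n) * m.factorial * n.factorial * (k - m - n).factorial *
              (l - n).factorial)
          = ((-1 : ℝ) ^ m * ((k - n).choose m : ℝ) * poch (d - a) m *
              poch ((d + n) + m) ((k - n) - m)) *
            ((k.choose n : ℝ) * ((-1 : ℝ) ^ n * poch (-(l : ℝ)) n)) /
            (poch d k * k.factorial * l.factorial) := by
        intro m hm
        have hmkn : m ≤ k - n := Nat.lt_succ_iff.mp (Finset.mem_range.mp hm)
        have e1 : poch d (m + n) * poch (d + (m + n : ℕ)) (k - (m + n)) = poch d k := by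
          rw [← poch_add]
          congr 1
          omega
        have e2 : ((k.choose n : ℝ)) * n.factorial * ((k - n).factorial : ℝ)
            = (k.factorial : ℝ) := by
          exact_mod_cast congrArg (Nat.cast (R := ℝ))
            (Nat.choose_mul_factorial_mul_factorial hnk)
        have e3 : (((k - n).choose m : ℝ)) * m.factorial * (((k - n) - m).factorial : ℝ)
            = ((k - n).factorial : ℝ) := by
          exact_mod_cast congrArg (Nat.cast (R := ℝ))
            (Nat.choose_mul_factorial_mul_factorial hmkn)
        have e4 : ((-1 : ℝ)) ^ n * poch (-(l : ℝ)) n * ((l - n).factorial : ℝ)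
            = (l.factorial : ℝ) := poch_neg_mul_factorial l n hnl
        have hbase : d + ((m + n : ℕ) : ℝ) = (d + n) + m := by push_cast; ring
        have hexp : k - (m + n) = (k - n) - m := by omega
        rw [hbase, hexp] at e1
        have hB : poch d (m + n) * (m.factorial : ℝ) * n.factorial * (k - m - n).factorial *
            (l - n).factorial ≠ 0 := by
          refine mul_ne_zero (mul_ne_zero (mul_ne_zero (mul_ne_zero (hpd _) (hfac _))
            (hfac _)) (hfac _)) (hfac _)
        have hC : poch d k * (k.factorial : ℝ) * l.factorial ≠ 0 :=
          mul_ne_zero (mul_ne_zero (hpd _) (hfac _)) (hfac _)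
        rw [div_eq_div_iff hB hC]
        have hkmn : k - m - n = (k - n) - m := by omega
        rw [hkmn]
        calc (-1 : ℝ) ^ m * poch (d - a) m * (poch d k * k.factorial * l.factorial)
            = (-1 : ℝ) ^ m * poch (d - a) m *
              ((poch d (m + n) * poch ((d + n) + m) ((k - n) - m)) *
               (((k.choose n : ℝ)) * n.factorial * ((((k - n).choose m : ℝ)) * m.factorial *
                 (((k - n) - m).factorial : ℝ))) *
               (((-1 : ℝ)) ^ n * poch (-(l : ℝ)) n * ((l - n).factorial : ℝ))) := by
              rw [e1, e3, e2, e4]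
          _ = (-1 : ℝ) ^ m * (((k - n).choose m : ℝ)) * poch (d - a) m *
                poch ((d + n) + m) ((k - n) - m) *
                (((k.choose n : ℝ)) * (((-1 : ℝ)) ^ n * poch (-(l : ℝ)) n)) *
                (poch d (m + n) * (m.factorial : ℝ) * n.factorial *
                  (((k - n) - m).factorial : ℝ) * ((l - n).factorial : ℝ)) := by
              ring
      rw [Finset.sum_congr rfl hterm, ← Finset.sum_div, ← Finset.sum_mul]
      rw [vandermonde (d - a) (k - n) (d + n)]
      have : (d + (n : ℝ)) - (d - a) = a + n := by ring
      rw [this]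
      ring_nf
    · have h0 : k + 1 - n = 0 := by omega
      rw [h0]
      simp only [Finset.range_zero, Finset.sum_empty]
      have : (k.choose n : ℝ) = 0 := by
        rw [Nat.choose_eq_zero_of_lt hnk]; simp
      rw [this]
      simp
  rw [Finset.sum_congr rfl (fun n hn => step1 n (Nat.lt_succ_iff.mp (Finset.mem_range.mp hn)))]
  -- Step 2: outer sum
  rw [← Finset.sum_div]
  set M := max k l with hM
  have hsum : ∑ n ∈ Finset.range (l + 1),
      (k.choose n : ℝ) * ((-1 : ℝ) ^ n * poch (-(l : ℝ)) n) * poch (a + n) (k - n)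
      = ∑ n ∈ Finset.range (M + 1),
          (k.choose n : ℝ) * ((-1 : ℝ) ^ n * poch (-(l : ℝ)) n) * poch (a + n) (k - n) := by
    refine Finset.sum_subset ?_ ?_
    · exact Finset.range_subset_range.mpr (by omega)
    · intro n _ hn
      have : l < n := by
        simp only [Finset.mem_range, not_lt] at hn
        omega
      rw [poch_neg_eq_zero this]
      ring
  have hsum2 : ∑ n ∈ Finset.range (k + 1),
      (-1 : ℝ) ^ n * (k.choose n : ℝ) * poch (-(l : ℝ)) n * poch (a + n) (k - n)
      = ∑ n ∈ Finset.range (M + 1),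
          (-1 : ℝ) ^ n * (k.choose n : ℝ) * poch (-(l : ℝ)) n * poch (a + n) (k - n) := by
    refine Finset.sum_subset ?_ ?_
    · exact Finset.range_subset_range.mpr (by omega)
    · intro n _ hn
      have : k < n := by
        simp only [Finset.mem_range, not_lt] at hn
        omega
      rw [Nat.choose_eq_zero_of_lt this]
      simp
  have hvdm := vandermonde (-(l : ℝ)) k a
  rw [hsum2, show (a - -(l:ℝ)) = a + l by ring] at hvdm
  have hfinal : ∑ n ∈ Finset.range (l + 1),
      (k.choose n : ℝ) * ((-1 : ℝ) ^ n * poch (-(l : ℝ)) n) * poch (a + n) (k - n)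
      = poch (a + l) k := by
    rw [hsum, ← hvdm]
    · refine Finset.sum_congr rfl fun n _ => ?_
      ring
  rw [hfinal]
  have hsplit : poch a (k + l) = poch a l * poch (a + l) k := by
    rw [add_comm k l, poch_add]
  rw [hsplit]
  rw [div_eq_div_iff (mul_ne_zero (mul_ne_zero (hpd k) (hfac k)) (hfac l))
    (mul_ne_zero (mul_ne_zero (mul_ne_zero (hpd k) (hpa l)) (hfac k)) (hfac l))]
  ring

lemma abs_poch_le (b : ℝ) (m : ℕ) : |poch b m| ≤ (|b| + 1) ^ m * m.factorial := by
  induction m with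
  | zero => simp [poch_zero]
  | succ m ih =>
    rw [poch_succ, abs_mul, pow_succ, Nat.factorial_succ]
    have h1 : |b + m| ≤ (|b| + 1) * (m + 1) := by
      have := abs_add_le b m
      have : |b + (m:ℝ)| ≤ |b| + m := by
        simpa using abs_add_le b m
      nlinarith [abs_nonneg b]
    have h2 : (0:ℝ) ≤ (|b| + 1) ^ m * m.factorial := by positivity
    calc |poch b m| * |b + m| ≤ ((|b| + 1) ^ m * m.factorial) * ((|b| + 1) * (m + 1)) := by
          exact mul_le_mul ih h1 (abs_nonneg _) h2
      _ = (|b| + 1) ^ m * (|b| + 1) * ((m + 1 : ℕ) * m.factorial) := by push_cast; ring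
      _ = (|b| + 1) ^ m * (|b| + 1) * ((m + 1) * m.factorial : ℕ) := by push_cast; ring

lemma exists_delta (d : ℝ) (hd : ∀ n : ℕ, d ≠ -(n : ℝ)) :
    ∃ δ : ℝ, 0 < δ ∧ ∀ i : ℕ, δ * (i + 1) ≤ |d + i| := by
  set N : ℕ := ⌈2 * |d|⌉₊ + 1 with hN
  have hd0 : ∀ i : ℕ, (0:ℝ) < |d + i| := by
    intro i
    rw [abs_pos]
    intro h
    exact hd i (by linarith)
  obtain ⟨i₀, hi₀mem, hi₀min⟩ := Finset.exists_min_image (Finset.range N)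
    (fun i => |d + i| / (i + 1)) ⟨0, Finset.mem_range.mpr (by omega)⟩
  set δ₀ : ℝ := |d + i₀| / (i₀ + 1) with hδ₀
  have hδ₀pos : 0 < δ₀ := by
    apply div_pos (hd0 i₀)
    positivity
  refine ⟨min δ₀ (1/2), lt_min hδ₀pos (by norm_num), fun i => ?_⟩
  rcases lt_or_ge i N with hi | hi
  · have h1 : δ₀ ≤ |d + i| / (i + 1) := hi₀min i (Finset.mem_range.mpr hi)
    have h2 : min δ₀ (1/2) ≤ δ₀ := min_le_left _ _
    have h3 : (0:ℝ) < (i:ℝ) + 1 := by positivity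
    rw [le_div_iff₀ h3] at h1
    nlinarith
  · have hge : 2 * |d| + 1 ≤ (i : ℝ) := by
      have h1 : 2 * |d| ≤ (⌈2 * |d|⌉₊ : ℝ) := Nat.le_ceil _
      have h2 : (N : ℝ) ≤ i := by exact_mod_cast hi
      push_cast [hN] at h2
      linarith
    have habs : (i : ℝ) - |d| ≤ |d + i| := by
      have h := abs_sub_abs_le_abs_sub (i:ℝ) (-d)
      rw [abs_neg, sub_neg_eq_add] at h
      have hi' : |(i:ℝ)| = (i:ℝ) := abs_of_nonneg (by positivity)
      rw [show d + (i:ℝ) = (i:ℝ) + d by ring]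
      linarith
    have h2 : min δ₀ (1/2) ≤ 1/2 := min_le_right _ _
    have : min δ₀ (1/2) * (i + 1) ≤ (1/2) * (i + 1) := by
      apply mul_le_mul_of_nonneg_right h2 (by positivity)
    nlinarith

lemma abs_poch_ge {d : ℝ} {δ : ℝ} (hδ : 0 < δ) (h : ∀ i : ℕ, δ * (i + 1) ≤ |d + i|)
    (j : ℕ) : δ ^ j * j.factorial ≤ |poch d j| := by
  induction j with
  | zero => simp [poch_zero]
  | succ j ih =>
    rw [poch_succ, abs_mul, pow_succ, Nat.factorial_succ]
    have h1 := h j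
    have h2 : (0:ℝ) ≤ δ ^ j * j.factorial := by positivity
    calc δ ^ j * δ * ((j + 1) * j.factorial : ℕ)
        = (δ ^ j * j.factorial) * (δ * ((j:ℝ) + 1)) := by push_cast; ring
      _ ≤ |poch d j| * |d + j| := by
          apply mul_le_mul ih h1 (by positivity) (abs_nonneg _)

lemma summable_phi3_norm (b d w' z' : ℝ) (hd : ∀ n : ℕ, d ≠ -(n : ℝ)) :
    Summable (fun q : ℕ × ℕ => ‖poch b q.1 /
        (poch d (q.1 + q.2) * q.1.factorial * q.2.factorial) * w' ^ q.1 * z' ^ q.2‖) := by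
  obtain ⟨δ, hδpos, hδ⟩ := exists_delta d hd
  set A : ℝ := (|b| + 1) * |w'| / δ with hA
  set B : ℝ := |z'| / δ with hB
  have hApos : 0 ≤ A := by positivity
  have hBpos : 0 ≤ B := by positivity
  have hsum : Summable (fun q : ℕ × ℕ => (A ^ q.1 / q.1.factorial) * (B ^ q.2 / q.2.factorial)) := by
    apply summable_mul_of_summable_norm (f := fun m : ℕ => A ^ m / m.factorial)
      (g := fun n : ℕ => B ^ n / n.factorial)
    · exact (Real.summable_pow_div_factorial A).norm
    · exact (Real.summable_pow_div_factorial B).norm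
  apply Summable.of_nonneg_of_le (fun q => norm_nonneg _) _ hsum
  rintro ⟨m, n⟩
  simp only [Real.norm_eq_abs, abs_mul, abs_div, abs_pow, Nat.abs_cast]
  have hfac : ∀ j : ℕ, (0:ℝ) < (j.factorial : ℝ) := fun j => by
    exact_mod_cast j.factorial_pos
  have hnum : |poch b m| * |w'| ^ m * |z'| ^ n
      ≤ ((|b| + 1) ^ m * m.factorial) * |w'| ^ m * |z'| ^ n := by
    have h1 : (0:ℝ) ≤ |w'| ^ m := by positivity
    have h2 : (0:ℝ) ≤ |z'| ^ n := by positivity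
    have h3 := mul_le_mul_of_nonneg_right (abs_poch_le b m) h1
    exact mul_le_mul_of_nonneg_right h3 h2
  have hden : (δ ^ m * δ ^ n * m.factorial) * (m.factorial : ℝ) * n.factorial
      ≤ |poch d (m + n)| * (m.factorial : ℝ) * n.factorial := by
    have h1 : δ ^ (m + n) * ((m + n).factorial : ℝ) ≤ |poch d (m + n)| :=
      abs_poch_ge hδpos hδ (m + n)
    have h2 : (m.factorial : ℝ) ≤ ((m + n).factorial : ℝ) := by
      exact_mod_cast Nat.factorial_le (by omega)
    have h3 : δ ^ (m + n) = δ ^ m * δ ^ n := pow_add δ m n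
    have h6 : δ ^ m * δ ^ n * (m.factorial : ℝ) ≤ |poch d (m + n)| := by
      calc δ ^ m * δ ^ n * (m.factorial : ℝ) ≤ δ ^ m * δ ^ n * ((m+n).factorial : ℝ) := by
            apply mul_le_mul_of_nonneg_left h2 (by positivity)
        _ = δ ^ (m + n) * ((m+n).factorial : ℝ) := by rw [h3]
        _ ≤ |poch d (m + n)| := h1
    have h7 : (0:ℝ) < (m.factorial : ℝ) * n.factorial := by positivity
    nlinarith [hfac m, hfac n, abs_nonneg (poch d (m+n))]
  calc |poch b m| / (|poch d (m + n)| * (m.factorial:ℝ) * (n.factorial:ℝ)) * |w'| ^ m * |z'| ^ n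
      = (|poch b m| * |w'| ^ m * |z'| ^ n) / (|poch d (m + n)| * (m.factorial:ℝ) * (n.factorial:ℝ)) := by
        ring
    _ ≤ (((|b| + 1) ^ m * m.factorial) * |w'| ^ m * |z'| ^ n) /
          ((δ ^ m * δ ^ n * m.factorial) * (m.factorial : ℝ) * n.factorial) := by
        apply div_le_div₀ (by positivity) hnum (by positivity) hden
    _ = (A ^ m / m.factorial) * (B ^ n / n.factorial) := by
        rw [hA, hB, div_pow, div_pow, mul_pow]
        field_simp


set_option maxHeartbeats 1000000 in
/-- Relation between the two-variable confluent hypergeometric functions: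
Ψ₂(a; d, a; w, z) = exp(w + z) Φ₃(d - a; d; -w, w z). -/
theorem psi2_eq_exp_mul_phi3 (a d w z : ℝ)
    (ha : ∀ n : ℕ, a ≠ -(n : ℝ)) (hd : ∀ n : ℕ, d ≠ -(n : ℝ)) :
    psi2 a d a w z = Real.exp (w + z) * phi3 (d - a) d (-w) (w * z) := by
  classical
  set T : ℕ × ℕ → ℝ := fun q =>
    poch (d - a) q.1 / (poch d (q.1 + q.2) * (Nat.factorial q.1) * (Nat.factorial q.2)) *
      (-w) ^ q.1 * (w * z) ^ q.2 with hTdef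
  set E : ℕ × ℕ → ℝ := fun p => w ^ p.1 / (Nat.factorial p.1) * (z ^ p.2 / (Nat.factorial p.2))
    with hEdef
  have hTnorm : Summable fun q => ‖T q‖ := summable_phi3_norm (d - a) d (-w) (w * z) hd
  have hTsum : Summable T := hTnorm.of_norm
  have hT : HasSum T (phi3 (d - a) d (-w) (w * z)) := by
    unfold phi3; exact hTsum.hasSum
  have hw : HasSum (fun n : ℕ => w ^ n / (Nat.factorial n)) (Real.exp w) := by
    rw [Real.exp_eq_exp_ℝ]; exact NormedSpace.expSeries_div_hasSum_exp w
  have hz : HasSum (fun n : ℕ => z ^ n / (Nat.factorial n)) (Real.exp z) := by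
    rw [Real.exp_eq_exp_ℝ]; exact NormedSpace.expSeries_div_hasSum_exp z
  have hEsum : Summable E := summable_mul_of_summable_norm hw.summable.norm hz.summable.norm
  have hEnorm : Summable fun p : ℕ × ℕ => ‖E p‖ := by
    have h := summable_mul_of_summable_norm
      (f := fun m : ℕ => ‖w ^ m / (Nat.factorial m : ℝ)‖)
      (g := fun n : ℕ => ‖z ^ n / (Nat.factorial n : ℝ)‖)
      (hw.summable.norm.congr (fun n => (norm_norm _).symm))
      (hz.summable.norm.congr (fun n => (norm_norm _).symm))
    exact h.congr (fun p => (norm_mul _ _).symm)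
  have hE : HasSum E (Real.exp (w + z)) := by
    rw [Real.exp_add]; exact hw.mul hz hEsum
  have hFsum : Summable (fun x : (ℕ × ℕ) × (ℕ × ℕ) => E x.1 * T x.2) :=
    summable_mul_of_summable_norm hEnorm hTnorm
  have hF : HasSum (fun x : (ℕ × ℕ) × (ℕ × ℕ) => E x.1 * T x.2)
      (Real.exp (w + z) * phi3 (d - a) d (-w) (w * z)) := hE.mul hT hFsum
  have hfib := hF.tsum_fiberwise
    (fun x : (ℕ × ℕ) × (ℕ × ℕ) => (x.2.1 + x.2.2 + x.1.1, x.2.2 + x.1.2))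
  unfold psi2
  rw [← hfib.tsum_eq]
  refine tsum_congr ?_
  rintro ⟨k, l⟩
  set S : Finset ((ℕ × ℕ) × (ℕ × ℕ)) :=
    ((Finset.range (k+1) ×ˢ Finset.range (l+1)) ×ˢ
      (Finset.range (k+1) ×ˢ Finset.range (l+1))).filter
      (fun x => x.2.1 + x.2.2 + x.1.1 = k ∧ x.2.2 + x.1.2 = l) with hSdef
  have hset : (fun x : (ℕ × ℕ) × (ℕ × ℕ) => (x.2.1 + x.2.2 + x.1.1, x.2.2 + x.1.2)) ⁻¹'
      {(k, l)} = (S : Set ((ℕ × ℕ) × (ℕ × ℕ))) := by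
    ext x
    simp only [Set.mem_preimage, Set.mem_singleton_iff, Prod.mk.injEq, hSdef,
      Finset.coe_filter, Set.mem_setOf_eq, Finset.mem_product, Finset.mem_range]
    constructor
    · rintro ⟨h1, h2⟩
      refine ⟨⟨⟨?_, ?_⟩, ?_, ?_⟩, h1, h2⟩ <;> omega
    · rintro ⟨_, h1, h2⟩
      exact ⟨h1, h2⟩
  rw [hset, Finset.tsum_subtype' S (fun x => E x.1 * T x.2)]
  have hbij : ∑ x ∈ S, E x.1 * T x.2
      = ∑ p ∈ (Finset.range (l+1)).sigma (fun n => Finset.range (k+1-n)),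
          E (k - p.2 - p.1, l - p.1) * T (p.2, p.1) := by
    refine Finset.sum_nbij' (fun x => ⟨x.2.2, x.2.1⟩)
      (fun p => ((k - p.2 - p.1, l - p.1), (p.2, p.1))) ?_ ?_ ?_ ?_ ?_
    · rintro ⟨⟨p, q⟩, ⟨m, n⟩⟩ hx
      simp only [hSdef, Finset.mem_filter, Finset.mem_product, Finset.mem_range] at hx
      simp only [Finset.mem_sigma, Finset.mem_range]
      omega
    · rintro ⟨n, m⟩ hp
      simp only [Finset.mem_sigma, Finset.mem_range] at hp
      simp only [hSdef, Finset.mem_filter, Finset.mem_product, Finset.mem_range]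
      omega
    · rintro ⟨⟨p, q⟩, ⟨m, n⟩⟩ hx
      simp only [hSdef, Finset.mem_filter, Finset.mem_product, Finset.mem_range] at hx
      have h1 : k - m - n = p := by omega
      have h2 : l - n = q := by omega
      dsimp only
      rw [h1, h2]
    · rintro ⟨n, m⟩ hp
      rfl
    · rintro ⟨⟨p, q⟩, ⟨m, n⟩⟩ hx
      simp only [hSdef, Finset.mem_filter, Finset.mem_product, Finset.mem_range] at hx
      have h1 : k - m - n = p := by omega
      have h2 : l - n = q := by omega
      dsimp only
      rw [h1, h2]
  rw [hbij, Finset.sum_sigma]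
  have hterm : ∀ n ∈ Finset.range (l+1), ∀ m ∈ Finset.range (k+1-n),
      E (k - m - n, l - n) * T (m, n)
      = (w ^ k * z ^ l) *
          ((-1 : ℝ) ^ m * poch (d - a) m /
            (poch d (m + n) * m.factorial * n.factorial * (k - m - n).factorial *
              (l - n).factorial)) := by
    intro n hn m hm
    have hnl : n ≤ l := Nat.lt_succ_iff.mp (Finset.mem_range.mp hn)
    have hmn : m + n ≤ k := by
      have := Finset.mem_range.mp hm
      omega
    simp only [hEdef, hTdef]
    have hwk : w ^ k = w ^ (k - m - n) * w ^ m * w ^ n := by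
      rw [← pow_add, ← pow_add]
      congr 1
      omega
    have hzl : z ^ l = z ^ (l - n) * z ^ n := by
      rw [← pow_add]
      congr 1
      omega
    rw [hwk, hzl, neg_pow, mul_pow]
    ring
  rw [Finset.sum_congr rfl (fun n hn => Finset.sum_congr rfl (hterm n hn))]
  have : ∑ n ∈ Finset.range (l+1), ∑ m ∈ Finset.range (k+1-n),
      (w ^ k * z ^ l) *
        ((-1 : ℝ) ^ m * poch (d - a) m /
          (poch d (m + n) * m.factorial * n.factorial * (k - m - n).factorial *
            (l - n).factorial))
      = (w ^ k * z ^ l) * ∑ n ∈ Finset.range (l+1), ∑ m ∈ Finset.range (k+1-n),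
          (-1 : ℝ) ^ m * poch (d - a) m /
            (poch d (m + n) * m.factorial * n.factorial * (k - m - n).factorial *
              (l - n).factorial) := by
    rw [Finset.mul_sum]
    refine Finset.sum_congr rfl fun n _ => ?_
    rw [Finset.mul_sum]
  rw [this, coeff_sum a d ha hd k l]
  ring
end

section
/- For any g with -g not a nonpositive integer and real w > 0, z, the expansion Φ₃(b; g; z, w) = Γ(g) · w^{(1−g)/2} · Σ_{j=0}^∞ (b)_j / j! · (z/√w)^j · I_{g+j−1}(2√w) holds, where I_ν is the modified Bessel function of the first kind. -/
open Real MeasureTheory Filter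

lemma poch_ne_zero_s4 {g : ℝ} (hg : ∀ n : ℕ, g ≠ -(n : ℝ)) (n : ℕ) : poch g n ≠ 0 := by
  refine Finset.prod_ne_zero_iff.2 fun i _ h => hg i (by linarith)

lemma gamma_add_nat {g : ℝ} (hg : ∀ n : ℕ, g ≠ -(n : ℝ)) (n : ℕ) :
    Real.Gamma (g + n) = poch g n * Real.Gamma g := by
  induction n with
  | zero => simp [poch]
  | succ n ih =>
    have h1 : g + ((n : ℕ) + 1 : ℕ) = (g + n) + 1 := by push_cast; ring
    have h2 : g + (n : ℝ) ≠ 0 := fun h => hg n (by linarith)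
    rw [h1, Real.Gamma_add_one h2, ih, poch_succ]; ring

lemma poch_lower {g : ℝ} (hg : ∀ n : ℕ, g ≠ -(n : ℝ)) {R : ℝ} (hR : 1 ≤ R) :
    ∃ C : ℝ, 0 < C ∧ ∀ n : ℕ, R ^ n ≤ C * |poch g n| := by
  have hR0 : (0 : ℝ) < R := lt_of_lt_of_le one_pos hR
  set N : ℕ := ⌈R + |g|⌉₊ with hN
  have habs : ∀ n, 0 < |poch g n| := fun n => abs_pos.2 (poch_ne_zero_s4 hg n)
  have hbig : ∀ i : ℕ, N ≤ i → R ≤ |g + i| := by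
    intro i hi
    have h1 : R + |g| ≤ (i : ℝ) := le_trans (Nat.le_ceil _) (by exact_mod_cast hi)
    have h2 : R ≤ g + i := by have := neg_abs_le g; linarith
    exact le_trans h2 (le_abs_self _)
  have key : ∀ m : ℕ, |poch g N| * R ^ m ≤ R ^ N * |poch g (N + m)| := by
    intro m
    induction m with
    | zero =>
      have h1 : (1 : ℝ) ≤ R ^ N := one_le_pow₀ hR
      simp only [pow_zero, Nat.add_zero, mul_one]
      nlinarith [habs N]
    | succ m ih =>
      have hstep : R ≤ |g + ((N + m : ℕ) : ℝ)| := hbig _ (Nat.le_add_right _ _)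
      have he : |poch g (N + (m + 1))| = |poch g (N + m)| * |g + ((N + m : ℕ) : ℝ)| := by
        rw [show N + (m + 1) = (N + m) + 1 from rfl, poch_succ, abs_mul]
      rw [he, pow_succ]
      calc |poch g N| * (R ^ m * R) = (|poch g N| * R ^ m) * R := by ring
        _ ≤ (R ^ N * |poch g (N + m)|) * R := mul_le_mul_of_nonneg_right ih hR0.le
        _ ≤ (R ^ N * |poch g (N + m)|) * |g + ((N + m : ℕ) : ℝ)| :=
            mul_le_mul_of_nonneg_left hstep (by positivity)
        _ = R ^ N * (|poch g (N + m)| * |g + ((N + m : ℕ) : ℝ)|) := by ring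
  set C : ℝ := (∑ m ∈ Finset.range (N + 1), R ^ m / |poch g m|) + R ^ (2 * N) / |poch g N|
    with hC
  have hsum_nonneg : (0:ℝ) ≤ ∑ m ∈ Finset.range (N + 1), R ^ m / |poch g m| :=
    Finset.sum_nonneg fun m _ => by positivity
  have hD : (0:ℝ) < R ^ (2 * N) / |poch g N| := div_pos (pow_pos hR0 _) (habs N)
  refine ⟨C, add_pos_of_nonneg_of_pos hsum_nonneg hD, fun n => ?_⟩
  by_cases hn : n ≤ N
  · have hmem : n ∈ Finset.range (N + 1) := Finset.mem_range.2 (Nat.lt_succ_of_le hn)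
    have h1 : R ^ n / |poch g n| ≤ ∑ m ∈ Finset.range (N + 1), R ^ m / |poch g m| :=
      Finset.single_le_sum (f := fun m => R ^ m / |poch g m|) (fun m _ => by positivity) hmem
    have h2 : R ^ n / |poch g n| ≤ C := le_trans h1 (by rw [hC]; linarith)
    calc R ^ n = (R ^ n / |poch g n|) * |poch g n| := by
          rw [div_mul_cancel₀ _ (ne_of_gt (habs n))]
      _ ≤ C * |poch g n| := mul_le_mul_of_nonneg_right h2 (abs_nonneg _)
  · push_neg at hn
    obtain ⟨m, rfl⟩ : ∃ m, n = N + m := ⟨n - N, by omega⟩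
    have h1 := key m
    have h2 : R ^ (N + m) = R ^ N * R ^ m := pow_add R N m
    have h3 : R ^ (2 * N) = R ^ N * R ^ N := by rw [two_mul, pow_add]
    have h4 : R ^ (2 * N) / |poch g N| ≤ C := by rw [hC]; linarith
    have h5 : R ^ (N + m) ≤ (R ^ (2 * N) / |poch g N|) * |poch g (N + m)| := by
      rw [h2, h3]
      rw [div_mul_eq_mul_div, le_div_iff₀ (habs N)]
      nlinarith [pow_pos hR0 N, pow_pos hR0 m, habs (N + m)]
    exact le_trans h5 (mul_le_mul_of_nonneg_right h4 (abs_nonneg _))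

lemma poch_abs_le (b : ℝ) (j : ℕ) : |poch b j| ≤ (|b| + 1) ^ j * (Nat.factorial j) := by
  rw [poch, Finset.abs_prod]
  calc ∏ i ∈ Finset.range j, |b + (i : ℝ)|
      ≤ ∏ i ∈ Finset.range j, (|b| + 1) * ((i : ℝ) + 1) := by
        refine Finset.prod_le_prod (fun i _ => abs_nonneg _) (fun i _ => ?_)
        calc |b + (i : ℝ)| ≤ |b| + i := by
              have := abs_add_le b (i : ℝ)
              simpa [Nat.abs_cast] using this
          _ ≤ (|b| + 1) * ((i : ℝ) + 1) := by nlinarith [abs_nonneg b, Nat.cast_nonneg (α := ℝ) i]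
    _ = (|b| + 1) ^ j * (Nat.factorial j) := by
        rw [Finset.prod_mul_distrib, Finset.prod_const, Finset.card_range]
        congr 1
        exact_mod_cast congrArg (Nat.cast : ℕ → ℝ) (Finset.prod_range_add_one_eq_factorial j)

set_option maxHeartbeats 1000000 in
lemma summable_aux {b g z w : ℝ} (hg : ∀ n : ℕ, g ≠ -(n : ℝ)) (hw : 0 < w) :
    Summable (fun q : ℕ × ℕ =>
      poch b q.1 / (poch g (q.1 + q.2) * (Nat.factorial q.1) * (Nat.factorial q.2)) *
        z ^ q.1 * w ^ q.2) := by
  obtain ⟨B, hB⟩ : ∃ B : ℝ, B = (|b| + 1) * (|z| + 1) := ⟨_, rfl⟩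
  have hB0 : 0 < B := by rw [hB]; positivity
  obtain ⟨R, hR⟩ : ∃ R : ℝ, R = 2 * B + w + 1 := ⟨_, rfl⟩
  have hR1 : (1 : ℝ) ≤ R := by rw [hR]; nlinarith
  have hR0 : (0 : ℝ) < R := lt_of_lt_of_le one_pos hR1
  obtain ⟨C, hC0, hCle⟩ := poch_lower hg hR1
  have hBR : B / R < 1 := by rw [div_lt_one hR0]; nlinarith
  apply Summable.of_norm_bounded
    (g := fun q : ℕ × ℕ => C * ((B / R) ^ q.1 * ((w / R) ^ q.2 / (Nat.factorial q.2))))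
  · apply Summable.mul_left
    exact (summable_geometric_of_lt_one (by positivity) hBR).mul_of_nonneg
      (Real.summable_pow_div_factorial (w / R))
      (fun j => by positivity) (fun k => by positivity)
  · rintro ⟨j, k⟩
    have hfj : (0 : ℝ) < (Nat.factorial j : ℝ) := by positivity
    have hfk : (0 : ℝ) < (Nat.factorial k : ℝ) := by positivity
    have hpabs : (0 : ℝ) < |poch g (j + k)| := abs_pos.2 (poch_ne_zero_s4 hg _)
    have hnorm : ‖poch b j / (poch g (j + k) * (Nat.factorial j) * (Nat.factorial k)) *
        z ^ j * w ^ k‖ =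
        |poch b j| * |z| ^ j * w ^ k / (|poch g (j + k)| * (Nat.factorial j) * (Nat.factorial k)) := by
      rw [Real.norm_eq_abs, abs_mul, abs_mul, abs_div, abs_mul, abs_mul, abs_pow, abs_pow,
        abs_of_pos hw, Nat.abs_cast, Nat.abs_cast]
      ring
    rw [hnorm]
    have e1 : |poch b j| * |z| ^ j ≤ B ^ j * (Nat.factorial j) := by
      calc |poch b j| * |z| ^ j ≤ ((|b| + 1) ^ j * (Nat.factorial j)) * |z| ^ j :=
            mul_le_mul_of_nonneg_right (poch_abs_le b j) (by positivity)
        _ = ((|b| + 1) * |z|) ^ j * (Nat.factorial j) := by rw [mul_pow]; ring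
        _ ≤ B ^ j * (Nat.factorial j) := by
            refine mul_le_mul_of_nonneg_right (pow_le_pow_left₀ (by positivity) ?_ j) hfj.le
            rw [hB]; nlinarith [abs_nonneg b, abs_nonneg z]
    have e2 : R ^ (j + k) ≤ C * |poch g (j + k)| := hCle _
    have goal2 : |poch b j| * |z| ^ j * w ^ k /
        (|poch g (j + k)| * (Nat.factorial j) * (Nat.factorial k)) ≤
        C * B ^ j * w ^ k / (R ^ (j + k) * (Nat.factorial k)) := by
      rw [div_le_div_iff₀ (by positivity) (by positivity)]
      have hw1 : (0:ℝ) ≤ w ^ k := by positivity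
      have t1 : |poch b j| * |z| ^ j * w ^ k * (R ^ (j + k) * (Nat.factorial k)) ≤
          (B ^ j * (Nat.factorial j)) * w ^ k * ((C * |poch g (j + k)|) * (Nat.factorial k)) := by
        apply mul_le_mul
        · exact mul_le_mul_of_nonneg_right e1 hw1
        · exact mul_le_mul_of_nonneg_right e2 hfk.le
        · positivity
        · positivity
      nlinarith [t1]
    refine le_trans goal2 (le_of_eq ?_)
    rw [div_pow, div_pow, pow_add]
    field_simp

/-- Expansion of Φ₃ in terms of modified Bessel functions of the first kind. -/
theorem phi3_besselI_expansion (b g z w : ℝ) (hg : ∀ n : ℕ, g ≠ -(n : ℝ)) (hw : 0 < w) :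
    phi3 b g z w =
      Real.Gamma g * w ^ ((1 - g) / 2) *
        ∑' j : ℕ, poch b j / (Nat.factorial j) * (z / Real.sqrt w) ^ j *
          besselI (g + j - 1) (2 * Real.sqrt w) := by
  have hs : (0 : ℝ) < Real.sqrt w := Real.sqrt_pos.2 hw
  have hΓ : Real.Gamma g ≠ 0 := Real.Gamma_ne_zero hg
  have hsum := summable_aux (b := b) (z := z) hg hw
  have hterm : ∀ j k : ℕ,
      poch b j / (poch g (j + k) * (Nat.factorial j) * (Nat.factorial k)) * z ^ j * w ^ k
      = Real.Gamma g * w ^ ((1 - g) / 2) *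
          (poch b j / (Nat.factorial j) * (z / Real.sqrt w) ^ j *
            ((2 * Real.sqrt w / 2) ^ (2 * (k : ℝ) + (g + j - 1)) /
              (Real.Gamma (g + j - 1 + k + 1) * (Nat.factorial k)))) := by
    intro j k
    have h2 : 2 * Real.sqrt w / 2 = Real.sqrt w := by ring
    have hΓarg : g + (j : ℝ) - 1 + k + 1 = g + ((j + k : ℕ) : ℝ) := by push_cast; ring
    rw [h2, hΓarg, gamma_add_nat hg]
    have hr1 : Real.sqrt w ^ (2 * (k : ℝ) + (g + j - 1))
        = w ^ k * Real.sqrt w ^ (g + (j : ℝ) - 1) := by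
      rw [Real.rpow_add hs]
      congr 1
      rw [show (2 * (k : ℝ)) = ((2 * k : ℕ) : ℝ) by push_cast; ring, Real.rpow_natCast,
        pow_mul, Real.sq_sqrt hw.le]
    have hr2 : w ^ ((1 - g) / 2) = Real.sqrt w ^ ((1 : ℝ) - g) := by
      rw [Real.sqrt_eq_rpow, ← Real.rpow_mul hw.le]
      congr 1; ring
    have hr3 : (z / Real.sqrt w) ^ j = z ^ j / Real.sqrt w ^ ((j : ℝ)) := by
      rw [div_pow, Real.rpow_natCast]
    have key2 : Real.sqrt w ^ (g + (j : ℝ) - 1)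
        = Real.sqrt w ^ ((j : ℝ)) / Real.sqrt w ^ ((1 : ℝ) - g) := by
      rw [← Real.rpow_sub hs]; congr 1; ring
    rw [hr1, hr2, hr3, key2]
    have n1 : Real.sqrt w ^ ((j : ℝ)) ≠ 0 := ne_of_gt (Real.rpow_pos_of_pos hs _)
    have n2 : Real.sqrt w ^ ((1 : ℝ) - g) ≠ 0 := ne_of_gt (Real.rpow_pos_of_pos hs _)
    have n3 : poch g (j + k) ≠ 0 := poch_ne_zero_s4 hg _
    have n4 : ((Nat.factorial j : ℝ)) ≠ 0 := by positivity
    have n5 : ((Nat.factorial k : ℝ)) ≠ 0 := by positivity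
    field_simp
  have inner : ∀ j : ℕ,
      (∑' k : ℕ, poch b j / (poch g (j + k) * (Nat.factorial j) * (Nat.factorial k)) *
          z ^ j * w ^ k)
      = Real.Gamma g * w ^ ((1 - g) / 2) *
          (poch b j / (Nat.factorial j) * (z / Real.sqrt w) ^ j *
            besselI (g + j - 1) (2 * Real.sqrt w)) := by
    intro j
    rw [besselI]
    calc (∑' k : ℕ, poch b j / (poch g (j + k) * (Nat.factorial j) * (Nat.factorial k)) *
            z ^ j * w ^ k)
        = ∑' k : ℕ, Real.Gamma g * w ^ ((1 - g) / 2) *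
            (poch b j / (Nat.factorial j) * (z / Real.sqrt w) ^ j *
              ((2 * Real.sqrt w / 2) ^ (2 * (k : ℝ) + (g + j - 1)) /
                (Real.Gamma (g + j - 1 + k + 1) * (Nat.factorial k)))) :=
          tsum_congr fun k => hterm j k
      _ = Real.Gamma g * w ^ ((1 - g) / 2) *
            ∑' k : ℕ, (poch b j / (Nat.factorial j) * (z / Real.sqrt w) ^ j *
              ((2 * Real.sqrt w / 2) ^ (2 * (k : ℝ) + (g + j - 1)) /
                (Real.Gamma (g + j - 1 + k + 1) * (Nat.factorial k)))) := tsum_mul_left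
      _ = Real.Gamma g * w ^ ((1 - g) / 2) *
            (poch b j / (Nat.factorial j) * (z / Real.sqrt w) ^ j *
              ∑' k : ℕ, ((2 * Real.sqrt w / 2) ^ (2 * (k : ℝ) + (g + j - 1)) /
                (Real.Gamma (g + j - 1 + k + 1) * (Nat.factorial k)))) := by
          rw [tsum_mul_left]
  have h0 : phi3 b g z w = ∑' (j : ℕ), ∑' (k : ℕ),
      poch b j / (poch g (j + k) * (Nat.factorial j) * (Nat.factorial k)) * z ^ j * w ^ k := by
    rw [phi3]
    exact Summable.tsum_prod hsum
  rw [h0, ← tsum_mul_left]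
  exact tsum_congr fun j => inner j
end

section
/- For κ > 0, μ > 0, Ω > 0, the function f(x) = (μ (1+κ)^{(μ+1)/2} x^{(μ−1)/2}) / (κ^{(μ−1)/2} exp(μκ) Ω^{(μ+1)/2}) · exp(−μ(1+κ)x/Ω) · I_{μ−1}(2μ√(κ(1+κ)x/Ω)) is a probability density on (0, ∞): it is nonnegative and ∫₀^∞ f(x) dx = 1. -/
open Real MeasureTheory Filter

/-- The κ-μ power probability density function. -/
noncomputable def kappaMuPDF (κ μ Ω x : ℝ) : ℝ :=
  μ * (1 + κ) ^ ((μ + 1) / 2) * x ^ ((μ - 1) / 2) /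
      (κ ^ ((μ - 1) / 2) * Real.exp (μ * κ) * Ω ^ ((μ + 1) / 2)) *
    Real.exp (-μ * (1 + κ) * x / Ω) *
    besselI (μ - 1) (2 * μ * Real.sqrt (κ * (1 + κ) * x / Ω))

private lemma kmu_key (κ μ Ω : ℝ) (hκ : 0 < κ) (hμ : 0 < μ) (hΩ : 0 < Ω) (k : ℕ) :
    (μ * (1 + κ) ^ ((μ + 1) / 2) / (κ ^ ((μ - 1) / 2) * Real.exp (μ * κ) * Ω ^ ((μ + 1) / 2)))
      * (μ^2*κ*(1+κ)/Ω) ^ ((k:ℝ) + (μ-1)/2) * (1/(μ*(1+κ)/Ω)) ^ ((k:ℝ) + μ)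
    = Real.exp (-(μ*κ)) * (μ*κ)^k := by
  have h1κ : (0:ℝ) < 1 + κ := by linarith
  have ha : (0:ℝ) < μ*(1+κ)/Ω := by positivity
  have hmk : (0:ℝ) < μ*κ := by positivity
  have ht : μ^2*κ*(1+κ)/Ω = (μ*κ) * (μ*(1+κ)/Ω) := by ring
  rw [ht, Real.mul_rpow hmk.le ha.le, one_div, Real.inv_rpow ha.le,
    ← Real.rpow_neg ha.le, mul_assoc, mul_assoc ((μ*κ) ^ ((k:ℝ) + (μ-1)/2)), ← Real.rpow_add ha]
  have he : (k:ℝ) + (μ-1)/2 + -((k:ℝ)+μ) = -((μ+1)/2) := by ring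
  rw [he, Real.rpow_neg (by positivity), Real.div_rpow (by positivity) hΩ.le,
    Real.mul_rpow hμ.le h1κ.le]
  rw [Real.rpow_add hmk, Real.rpow_natCast, Real.mul_rpow hμ.le hκ.le]
  have hμ1 : μ ^ ((μ+1)/2) = μ ^ ((μ-1)/2) * μ := by
    rw [← Real.rpow_add_one hμ.ne']; congr 1; ring
  rw [hμ1, Real.exp_neg]
  have e1 : κ ^ ((μ-1)/2) ≠ 0 := by positivity
  have e2 : Real.exp (μ*κ) ≠ 0 := Real.exp_ne_zero _
  have e3 : Ω ^ ((μ+1)/2) ≠ 0 := by positivity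
  have e4 : (1+κ) ^ ((μ+1)/2) ≠ 0 := by positivity
  have e5 : μ ^ ((μ-1)/2) ≠ 0 := by positivity
  have e6 : μ ≠ 0 := hμ.ne'
  field_simp

private lemma kmu_term (κ μ Ω x : ℝ) (hκ : 0 < κ) (hμ : 0 < μ) (hΩ : 0 < Ω) (hx : 0 < x)
    (k : ℕ) :
    μ * (1 + κ) ^ ((μ + 1) / 2) * x ^ ((μ - 1) / 2) /
        (κ ^ ((μ - 1) / 2) * Real.exp (μ * κ) * Ω ^ ((μ + 1) / 2)) *
      Real.exp (-μ * (1 + κ) * x / Ω) *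
      ((2 * μ * Real.sqrt (κ * (1 + κ) * x / Ω) / 2) ^ (2 * (k:ℝ) + (μ - 1)) /
        (Real.Gamma ((μ - 1) + k + 1) * (Nat.factorial k)))
    = (μ * (1 + κ) ^ ((μ + 1) / 2) / (κ ^ ((μ - 1) / 2) * Real.exp (μ * κ) * Ω ^ ((μ + 1) / 2)))
        * (μ^2*κ*(1+κ)/Ω) ^ ((k:ℝ) + (μ-1)/2) / (Real.Gamma (μ + k) * (Nat.factorial k))
        * (x ^ (((k:ℝ) + μ) - 1) * Real.exp (-(μ*(1+κ)/Ω * x))) := by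
  have h1κ : (0:ℝ) < 1 + κ := by linarith
  have htpos : (0:ℝ) < μ^2*κ*(1+κ)/Ω := by positivity
  have hs : 2 * μ * Real.sqrt (κ * (1 + κ) * x / Ω) / 2
      = Real.sqrt ((μ^2*κ*(1+κ)/Ω) * x) := by
    have h : (μ^2*κ*(1+κ)/Ω) * x = μ^2 * (κ*(1+κ)*x/Ω) := by ring
    rw [h, Real.sqrt_mul (by positivity), Real.sqrt_sq hμ.le]
    ring
  have htx : (0:ℝ) ≤ (μ^2*κ*(1+κ)/Ω) * x := by positivity
  rw [hs, Real.sqrt_eq_rpow, ← Real.rpow_mul htx]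
  have he2 : 1/2 * (2 * (k:ℝ) + (μ - 1)) = (k:ℝ) + (μ-1)/2 := by ring
  rw [he2, Real.mul_rpow htpos.le hx.le]
  have hg : (μ - 1) + (k:ℝ) + 1 = μ + k := by ring
  rw [hg]
  have hexp : -μ * (1 + κ) * x / Ω = -(μ*(1+κ)/Ω * x) := by ring
  rw [hexp]
  have hxp : x ^ (((k:ℝ) + μ) - 1) = x ^ ((μ-1)/2) * x ^ ((k:ℝ) + (μ-1)/2) := by
    rw [← Real.rpow_add hx]; congr 1; ring
  rw [hxp]
  ring

private lemma kmu_integrable (κ μ Ω : ℝ) (hκ : 0 < κ) (hμ : 0 < μ) (hΩ : 0 < Ω) (k : ℕ) (D : ℝ) :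
    IntegrableOn (fun x : ℝ =>
      D * (x ^ (((k:ℝ) + μ) - 1) * Real.exp (-(μ*(1+κ)/Ω * x)))) (Set.Ioi 0) := by
  have h1κ : (0:ℝ) < 1 + κ := by linarith
  have ha : (0:ℝ) < μ*(1+κ)/Ω := by positivity
  have h := integrableOn_rpow_mul_exp_neg_mul_rpow
    (show (-1:ℝ) < ((k:ℝ) + μ) - 1 by nlinarith [Nat.cast_nonneg (α := ℝ) k])
    zero_lt_one ha
  simp only [Real.rpow_one] at h
  have h2 : IntegrableOn (fun x : ℝ =>
      x ^ (((k:ℝ) + μ) - 1) * Real.exp (-(μ*(1+κ)/Ω * x))) (Set.Ioi 0) := by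
    refine h.congr_fun (fun x _ => by simp only [neg_mul]) measurableSet_Ioi
  exact h2.const_mul D

private lemma kmu_sum : True := trivial


/-- The κ-μ density is a probability density on (0, ∞). -/
theorem kappaMuPDF_is_density (κ μ Ω : ℝ) (hκ : 0 < κ) (hμ : 0 < μ) (hΩ : 0 < Ω) :
    (∀ x : ℝ, 0 < x → 0 ≤ kappaMuPDF κ μ Ω x) ∧
      ∫ x in Set.Ioi (0:ℝ), kappaMuPDF κ μ Ω x = 1 := by
  have h1κ : (0:ℝ) < 1 + κ := by linarith
  have ha : (0:ℝ) < μ*(1+κ)/Ω := by positivity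
  have hmk : (0:ℝ) < μ*κ := by positivity
  -- nonnegativity
  have hnon : ∀ x : ℝ, 0 < x → 0 ≤ kappaMuPDF κ μ Ω x := by
    intro x hx
    unfold kappaMuPDF besselI
    refine mul_nonneg (mul_nonneg (by positivity) (Real.exp_pos _).le) ?_
    refine tsum_nonneg fun k => div_nonneg (Real.rpow_nonneg (by positivity) _) ?_
    have : (0:ℝ) < (μ - 1) + k + 1 := by
      have : (0:ℝ) ≤ k := Nat.cast_nonneg k
      linarith
    exact mul_nonneg (Real.Gamma_pos_of_pos this).le (by positivity)
  refine ⟨hnon, ?_⟩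
  set C : ℝ := μ * (1 + κ) ^ ((μ + 1) / 2) /
      (κ ^ ((μ - 1) / 2) * Real.exp (μ * κ) * Ω ^ ((μ + 1) / 2)) with hC
  set g : ℕ → ℝ → ℝ := fun k x =>
    C * (μ^2*κ*(1+κ)/Ω) ^ ((k:ℝ) + (μ-1)/2) / (Real.Gamma (μ + k) * (Nat.factorial k))
      * (x ^ (((k:ℝ) + μ) - 1) * Real.exp (-(μ*(1+κ)/Ω * x))) with hg
  -- pointwise expansion
  have hpt : ∀ x ∈ Set.Ioi (0:ℝ), kappaMuPDF κ μ Ω x = ∑' k : ℕ, g k x := by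
    intro x hx
    rw [Set.mem_Ioi] at hx
    unfold kappaMuPDF besselI
    rw [← tsum_mul_left]
    exact tsum_congr fun k => kmu_term κ μ Ω x hκ hμ hΩ hx k
  -- value of each integral
  have hint : ∀ k : ℕ, ∫ x in Set.Ioi (0:ℝ), g k x
      = Real.exp (-(μ*κ)) * ((μ*κ)^k / (Nat.factorial k)) := by
    intro k
    rw [hg]
    simp only
    rw [MeasureTheory.integral_const_mul,
      integral_rpow_mul_exp_neg_mul_Ioi
        (show (0:ℝ) < (k:ℝ) + μ by positivity) ha]
    have hΓ : Real.Gamma ((k:ℝ) + μ) = Real.Gamma (μ + k) := by rw [add_comm]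
    rw [hΓ]
    have hΓpos : (0:ℝ) < Real.Gamma (μ + k) :=
      Real.Gamma_pos_of_pos (by positivity)
    have hfac : (0:ℝ) < (Nat.factorial k : ℝ) := by positivity
    have key := kmu_key κ μ Ω hκ hμ hΩ k
    rw [← hC] at key
    have hrw : C * (μ^2*κ*(1+κ)/Ω) ^ ((k:ℝ) + (μ-1)/2) / (Real.Gamma (μ+k) * (Nat.factorial k))
          * ((1/(μ*(1+κ)/Ω)) ^ ((k:ℝ)+μ) * Real.Gamma (μ+k))
        = (C * (μ^2*κ*(1+κ)/Ω) ^ ((k:ℝ) + (μ-1)/2) * (1/(μ*(1+κ)/Ω)) ^ ((k:ℝ)+μ))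
          * (Real.Gamma (μ+k) / (Real.Gamma (μ+k) * (Nat.factorial k))) := by ring
    rw [hrw, key]
    have hone : Real.Gamma (μ + (k:ℝ)) / (Real.Gamma (μ + (k:ℝ)) * (Nat.factorial k : ℝ))
        = 1 / (Nat.factorial k : ℝ) := by
      rw [mul_comm, ← div_div, div_right_comm, div_self hΓpos.ne']
    rw [hone]
    ring
  -- summability of the integral values
  have hsummable : Summable (fun k : ℕ => Real.exp (-(μ*κ)) * ((μ*κ)^k / (Nat.factorial k))) :=
    (Real.summable_pow_div_factorial (μ*κ)).mul_left _
  have hsum : ∑' k : ℕ, Real.exp (-(μ*κ)) * ((μ*κ)^k / (Nat.factorial k)) = 1 := by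
    rw [tsum_mul_left]
    have : ∑' k : ℕ, (μ*κ)^k / (Nat.factorial k) = Real.exp (μ*κ) := by
      rw [Real.exp_eq_exp_ℝ, NormedSpace.exp_eq_tsum_div]
    rw [this, ← Real.exp_add]
    simp
  -- nonnegativity of g on Ioi 0
  have hgnon : ∀ k : ℕ, ∀ x ∈ Set.Ioi (0:ℝ), 0 ≤ g k x := by
    intro k x hx
    rw [Set.mem_Ioi] at hx
    rw [hg]
    simp only
    have hΓpos : (0:ℝ) < Real.Gamma (μ + k) := Real.Gamma_pos_of_pos (by positivity)
    have : (0:ℝ) < C := by rw [hC]; positivity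
    positivity
  have hgint : ∀ k : ℕ, IntegrableOn (g k) (Set.Ioi (0:ℝ)) := fun k =>
    kmu_integrable κ μ Ω hκ hμ hΩ k _
  -- interchange
  rw [MeasureTheory.setIntegral_congr_fun measurableSet_Ioi hpt]
  rw [MeasureTheory.integral_tsum (fun k => (hgint k).aestronglyMeasurable) ?_]
  · rw [tsum_congr hint, hsum]
  · have hlin : ∀ k : ℕ, ∫⁻ x in Set.Ioi (0:ℝ), ‖g k x‖ₑ
        = ENNReal.ofReal (Real.exp (-(μ*κ)) * ((μ*κ)^k / (Nat.factorial k))) := by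
      intro k
      rw [← hint k, MeasureTheory.ofReal_integral_eq_lintegral_ofReal (hgint k)
        ((MeasureTheory.ae_restrict_iff' measurableSet_Ioi).2
          (Filter.Eventually.of_forall (hgnon k)))]
      refine MeasureTheory.lintegral_congr_ae ?_
      filter_upwards [MeasureTheory.ae_restrict_mem measurableSet_Ioi] with x hx
      rw [Real.enorm_eq_ofReal (hgnon k x hx)]
    simp_rw [hlin]
    rw [← ENNReal.ofReal_tsum_of_nonneg (fun k => by positivity) hsummable, hsum]
    exact ENNReal.ofReal_ne_top
end

section
/- For κ > 0, μ > 0, Ω > 0 and z ≥ 0, the cumulative distribution function of the κ-μ power distribution satisfies ∫₀^z f(x) dx = 1 − Q_μ(√(2κμ), √(2(1+κ)μ z / Ω)), where f is the κ-μ density and Q_μ is the generalized Marcum Q function. -/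
open Real MeasureTheory Filter

section AuxKappaMu

open scoped ENNReal

private lemma eq_of_log_eq' {a b : ℝ} (ha : 0 < a) (hb : 0 < b)
    (h : Real.log a = Real.log b) : a = b := by
  rw [← Real.exp_log ha, ← Real.exp_log hb, h]

/-- series terms -/
private noncomputable def Fterm (α μ : ℝ) (k : ℕ) (x : ℝ) : ℝ :=
  (Real.exp (-α ^ 2 / 2) * (α / 2) ^ (2 * (k:ℝ) + μ - 1) /
      (Real.Gamma (μ + k) * (Nat.factorial k))) *
    (x ^ (2 * (k:ℝ) + 2 * μ - 1) * Real.exp (-(1/2:ℝ) * x ^ (2:ℝ)))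

private noncomputable def gfun (α μ : ℝ) (x : ℝ) : ℝ :=
  x ^ μ * Real.exp (-(α ^ 2 + x ^ 2) / 2) * besselI (μ - 1) (α * x)

variable {α μ : ℝ}

private lemma Fterm_nonneg (hα : 0 < α) (hμ : 0 < μ) (k : ℕ) {x : ℝ} (hx : 0 < x) :
    0 ≤ Fterm α μ k x := by
  have h1 : (0:ℝ) < Real.Gamma (μ + k) := Real.Gamma_pos_of_pos (by positivity)
  unfold Fterm; positivity

private lemma g_eq_tsum (hα : 0 < α) (hμ : 0 < μ) {x : ℝ} (hx : 0 < x) :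
    gfun α μ x = ∑' k : ℕ, Fterm α μ k x := by
  rw [gfun, besselI, ← tsum_mul_left]
  refine tsum_congr fun k => ?_
  have hΓ : μ - 1 + (k:ℝ) + 1 = μ + k := by ring
  rw [hΓ]
  have h1 : (0:ℝ) < Real.Gamma (μ + k) := Real.Gamma_pos_of_pos (by positivity)
  have h2 : (0:ℝ) < (Nat.factorial k : ℝ) := by positivity
  unfold Fterm
  apply eq_of_log_eq' (by positivity) (by positivity)
  simp (disch := positivity) only [Real.log_mul, Real.log_div, Real.log_rpow, Real.log_exp,
    Real.log_pow, Real.rpow_two, Real.log_one]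
  ring

private lemma Fterm_integrableOn (hμ : 0 < μ) (k : ℕ) :
    IntegrableOn (Fterm α μ k) (Set.Ioi (0:ℝ)) := by
  exact (integrableOn_rpow_mul_exp_neg_mul_rpow (by nlinarith [Nat.cast_nonneg (α := ℝ) k])
    (by norm_num) (by norm_num : (0:ℝ) < 1/2)).const_mul _

private lemma Fterm_integral (hα : 0 < α) (hμ : 0 < μ) (k : ℕ) :
    ∫ x in Set.Ioi (0:ℝ), Fterm α μ k x =
    Real.exp (-α ^ 2 / 2) * α ^ (μ - 1) * ((α^2/2) ^ k / (Nat.factorial k)) := by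
  unfold Fterm
  rw [MeasureTheory.integral_const_mul, integral_rpow_mul_exp_neg_mul_rpow (by norm_num)
    (by nlinarith [Nat.cast_nonneg (α := ℝ) k]) (by norm_num)]
  have h1 : (0:ℝ) < Real.Gamma (μ + k) := Real.Gamma_pos_of_pos (by positivity)
  have h2 : (0:ℝ) < (Nat.factorial k : ℝ) := by positivity
  have h3 : (2 * (k:ℝ) + 2 * μ - 1 + 1) / 2 = μ + k := by ring
  rw [h3]
  apply eq_of_log_eq' (by positivity) (by positivity)
  simp (disch := positivity) only [Real.log_mul, Real.log_div, Real.log_rpow, Real.log_exp,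
    Real.log_pow, Real.rpow_two, Real.log_one]
  ring

private lemma cseq_summable (α μ : ℝ) :
    Summable (fun k : ℕ => Real.exp (-α ^ 2 / 2) * α ^ (μ - 1) *
      ((α^2/2) ^ k / (Nat.factorial k))) :=
  (Real.summable_pow_div_factorial _).mul_left _

private lemma cseq_tsum (α μ : ℝ) :
    ∑' k : ℕ, Real.exp (-α ^ 2 / 2) * α ^ (μ - 1) * ((α^2/2) ^ k / (Nat.factorial k)) =
    α ^ (μ - 1) := by
  rw [tsum_mul_left]
  have h : ∑' k : ℕ, ((α^2/2) ^ k / (Nat.factorial k) : ℝ) = Real.exp (α^2/2) := by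
    rw [Real.exp_eq_exp_ℝ, NormedSpace.exp_eq_tsum_div]
  rw [h, mul_comm (Real.exp (-α ^ 2 / 2)) (α ^ (μ - 1)), mul_assoc, ← Real.exp_add,
    show -α ^ 2 / 2 + α ^ 2 / 2 = 0 by ring, Real.exp_zero, mul_one]

private lemma Fterm_meas (k : ℕ) : Measurable (Fterm α μ k) := by
  unfold Fterm
  fun_prop

private lemma Fterm_lintegral_sum_ne_top (hα : 0 < α) (hμ : 0 < μ) :
    ∑' k : ℕ, ∫⁻ x in Set.Ioi (0:ℝ), ‖Fterm α μ k x‖₊ ≠ ⊤ := by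
  have hae : ∀ k : ℕ, ∫⁻ x in Set.Ioi (0:ℝ), (‖Fterm α μ k x‖₊ : ℝ≥0∞) =
      ENNReal.ofReal (∫ x in Set.Ioi (0:ℝ), Fterm α μ k x) := by
    intro k
    rw [MeasureTheory.ofReal_integral_eq_lintegral_ofReal (Fterm_integrableOn hμ k)
      ((MeasureTheory.ae_restrict_iff' measurableSet_Ioi).2 (Eventually.of_forall
        (fun x hx => Fterm_nonneg hα hμ k hx)))]
    refine MeasureTheory.lintegral_congr_ae
      ((MeasureTheory.ae_restrict_iff' measurableSet_Ioi).2 (Eventually.of_forall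
      (fun x hx => ?_)))
    simp only
    exact (enorm_eq_nnnorm _).symm.trans (Real.enorm_eq_ofReal (Fterm_nonneg hα hμ k hx))
  simp_rw [hae, Fterm_integral hα hμ]
  rw [← ENNReal.ofReal_tsum_of_nonneg (fun k => by positivity) (cseq_summable α μ)]
  exact ENNReal.ofReal_ne_top

private lemma Gfun_lint (hα : 0 < α) (hμ : 0 < μ) :
    ∫⁻ x in Set.Ioi (0:ℝ), (∑' k : ℕ, ENNReal.ofReal (Fterm α μ k x)) < ⊤ := by
  rw [MeasureTheory.lintegral_tsum (fun k => ((Fterm_meas k).ennreal_ofReal).aemeasurable)]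
  refine lt_of_le_of_lt (ENNReal.tsum_le_tsum fun k => MeasureTheory.lintegral_mono fun x => ?_)
    (lt_top_iff_ne_top.2 (Fterm_lintegral_sum_ne_top hα hμ))
  rw [← enorm_eq_nnnorm, Real.enorm_eq_ofReal_abs]
  exact ENNReal.ofReal_le_ofReal (le_abs_self _)

private lemma gfun_eq_toReal (hα : 0 < α) (hμ : 0 < μ) {x : ℝ} (hx : 0 < x) :
    gfun α μ x = (∑' k : ℕ, ENNReal.ofReal (Fterm α μ k x)).toReal := by
  rw [g_eq_tsum hα hμ hx,
    ENNReal.tsum_toReal_eq (fun k => ENNReal.ofReal_ne_top)]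
  exact tsum_congr fun k => (ENNReal.toReal_ofReal (Fterm_nonneg hα hμ k hx)).symm

private lemma gfun_integrableOn (hα : 0 < α) (hμ : 0 < μ) :
    IntegrableOn (gfun α μ) (Set.Ioi (0:ℝ)) := by
  have hGmeas : Measurable fun x => (∑' k : ℕ, ENNReal.ofReal (Fterm α μ k x)).toReal :=
    (Measurable.ennreal_tsum fun k => (Fterm_meas k).ennreal_ofReal).ennreal_toReal
  have hcong : gfun α μ =ᵐ[volume.restrict (Set.Ioi (0:ℝ))]
      fun x => (∑' k : ℕ, ENNReal.ofReal (Fterm α μ k x)).toReal := by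
    filter_upwards [MeasureTheory.ae_restrict_mem measurableSet_Ioi] with x hx
    exact gfun_eq_toReal hα hμ hx
  have hfin : ∀ᵐ x ∂(volume.restrict (Set.Ioi (0:ℝ))),
      (∑' k : ℕ, ENNReal.ofReal (Fterm α μ k x)) ≠ ⊤ := by
    filter_upwards [MeasureTheory.ae_lt_top
      (Measurable.ennreal_tsum fun k => (Fterm_meas k).ennreal_ofReal)
      (Gfun_lint hα hμ).ne] with x hx
    exact hx.ne
  refine ⟨hGmeas.aestronglyMeasurable.congr hcong.symm, ?_⟩
  rw [MeasureTheory.hasFiniteIntegral_congr hcong]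
  refine lt_of_le_of_lt (MeasureTheory.lintegral_mono_ae ?_) (Gfun_lint hα hμ)
  filter_upwards [hfin] with x hx
  rw [Real.enorm_eq_ofReal_abs, abs_of_nonneg ENNReal.toReal_nonneg]
  exact le_of_eq (ENNReal.ofReal_toReal hx)

private lemma gfun_integral (hα : 0 < α) (hμ : 0 < μ) :
    ∫ x in Set.Ioi (0:ℝ), gfun α μ x = α ^ (μ - 1) := by
  have h1 : ∫ x in Set.Ioi (0:ℝ), gfun α μ x
      = ∫ x in Set.Ioi (0:ℝ), ∑' k : ℕ, Fterm α μ k x := by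
    refine MeasureTheory.setIntegral_congr_fun measurableSet_Ioi fun x hx => ?_
    exact g_eq_tsum hα hμ hx
  rw [h1, MeasureTheory.integral_tsum (fun k => (Fterm_meas k).aestronglyMeasurable)
    (Fterm_lintegral_sum_ne_top hα hμ)]
  simp_rw [Fterm_integral hα hμ]
  exact cseq_tsum α μ

private lemma key_subst {κ μ Ω : ℝ} (hκ : 0 < κ) (hμ : 0 < μ) (hΩ : 0 < Ω) {x : ℝ} (hx : 0 < x) :
    |2 * (Ω / (2 * μ * (1 + κ))) * x| * kappaMuPDF κ μ Ω (Ω / (2 * μ * (1 + κ)) * x ^ 2) =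
    Real.sqrt (2 * κ * μ) ^ (1 - μ) * gfun (Real.sqrt (2 * κ * μ)) μ x := by
  have hκ1 : (0:ℝ) < 1 + κ := by linarith
  have hα : (0:ℝ) < Real.sqrt (2 * κ * μ) := Real.sqrt_pos.2 (by positivity)
  have harg : 2 * μ * Real.sqrt (κ * (1 + κ) * (Ω / (2 * μ * (1 + κ)) * x ^ 2) / Ω) =
      Real.sqrt (2 * κ * μ) * x := by
    rw [show κ * (1 + κ) * (Ω / (2 * μ * (1 + κ)) * x ^ 2) / Ω =
        (Real.sqrt (2 * κ * μ) * x / (2 * μ)) ^ 2 by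
      rw [div_pow, mul_pow, Real.sq_sqrt (by positivity)]; field_simp]
    rw [Real.sqrt_sq (by positivity)]
    field_simp
  rw [kappaMuPDF, gfun, harg, abs_of_pos (by positivity)]
  rw [Real.sq_sqrt (by positivity : (0:ℝ) ≤ 2 * κ * μ)]
  have hscal : 2 * (Ω / (2 * μ * (1 + κ))) * x *
      (μ * (1 + κ) ^ ((μ + 1) / 2) * (Ω / (2 * μ * (1 + κ)) * x ^ 2) ^ ((μ - 1) / 2) /
        (κ ^ ((μ - 1) / 2) * Real.exp (μ * κ) * Ω ^ ((μ + 1) / 2)) *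
        Real.exp (-μ * (1 + κ) * (Ω / (2 * μ * (1 + κ)) * x ^ 2) / Ω)) =
      Real.sqrt (2 * κ * μ) ^ (1 - μ) *
        (x ^ μ * Real.exp (-(2 * κ * μ + x ^ 2) / 2)) := by
    apply eq_of_log_eq' (by positivity) (by positivity)
    simp (disch := positivity) only [Real.log_mul, Real.log_div, Real.log_rpow, Real.log_exp,
      Real.log_pow, Real.log_sqrt, Real.log_one]
    push_cast
    field_simp
    ring
  linear_combination besselI (μ - 1) (Real.sqrt (2 * κ * μ) * x) * hscal

private lemma img_sq {d β : ℝ} (hd : 0 < d) (hβ : 0 ≤ β) :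
    (fun x : ℝ => d * x ^ 2) '' Set.Ioc 0 β = Set.Ioc 0 (d * β ^ 2) := by
  ext y
  constructor
  · rintro ⟨x, ⟨hx0, hxβ⟩, rfl⟩
    simp only
    refine ⟨by positivity, ?_⟩
    have := pow_le_pow_left₀ hx0.le hxβ 2
    nlinarith
  · rintro ⟨hy0, hyz⟩
    have hyd : 0 < y / d := by positivity
    refine ⟨Real.sqrt (y / d), ⟨Real.sqrt_pos.2 hyd, ?_⟩, ?_⟩
    · have h1 : y / d ≤ β ^ 2 := by rw [div_le_iff₀ hd]; nlinarith
      exact (Real.sqrt_le_sqrt h1).trans_eq (Real.sqrt_sq hβ)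
    · simp only [Real.sq_sqrt hyd.le]
      field_simp

end AuxKappaMu

/-- The CDF of the κ-μ power distribution in terms of the Marcum Q function. -/
theorem kappaMuCDF_eq_marcumQ (κ μ Ω z : ℝ) (hκ : 0 < κ) (hμ : 0 < μ) (hΩ : 0 < Ω)
    (hz : 0 ≤ z) :
    ∫ x in Set.Ioc (0:ℝ) z, kappaMuPDF κ μ Ω x =
      1 - marcumQ μ (Real.sqrt (2 * κ * μ)) (Real.sqrt (2 * (1 + κ) * μ * z / Ω)) := by
  have hκ1 : (0:ℝ) < 1 + κ := by linarith
  have hα : (0:ℝ) < Real.sqrt (2 * κ * μ) := Real.sqrt_pos.2 (by positivity)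
  set α := Real.sqrt (2 * κ * μ) with hαdef
  set β := Real.sqrt (2 * (1 + κ) * μ * z / Ω) with hβdef
  have hβ0 : 0 ≤ β := Real.sqrt_nonneg _
  have hd : (0:ℝ) < Ω / (2 * μ * (1 + κ)) := by positivity
  have hβz : Ω / (2 * μ * (1 + κ)) * β ^ 2 = z := by
    rw [hβdef, Real.sq_sqrt (by positivity)]
    field_simp
  have hderiv : ∀ x ∈ Set.Ioc (0:ℝ) β, HasDerivWithinAt
      (fun x : ℝ => Ω / (2 * μ * (1 + κ)) * x ^ 2)
      (2 * (Ω / (2 * μ * (1 + κ))) * x) (Set.Ioc (0:ℝ) β) x := by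
    intro x _
    have h := ((hasDerivAt_pow 2 x).const_mul
      (Ω / (2 * μ * (1 + κ)))).hasDerivWithinAt (s := Set.Ioc (0:ℝ) β)
    refine h.congr_deriv ?_
    push_cast
    ring
  have hinj : Set.InjOn (fun x : ℝ => Ω / (2 * μ * (1 + κ)) * x ^ 2) (Set.Ioc (0:ℝ) β) := by
    intro a ha b hb h
    simp only at h
    have h2 : a ^ 2 = b ^ 2 := mul_left_cancel₀ hd.ne' h
    calc a = Real.sqrt (a ^ 2) := (Real.sqrt_sq ha.1.le).symm
    _ = Real.sqrt (b ^ 2) := by rw [h2]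
    _ = b := Real.sqrt_sq hb.1.le
  have hsub : ∫ x in Set.Ioc (0:ℝ) z, kappaMuPDF κ μ Ω x
      = α ^ (1 - μ) * ∫ x in Set.Ioc (0:ℝ) β, gfun α μ x := by
    rw [← hβz, ← img_sq hd hβ0,
      integral_image_eq_integral_abs_deriv_smul measurableSet_Ioc hderiv hinj _,
      ← MeasureTheory.integral_const_mul]
    refine MeasureTheory.setIntegral_congr_fun measurableSet_Ioc fun x hx => ?_
    rw [smul_eq_mul]
    exact key_subst hκ hμ hΩ hx.1
  have hsplit : ∫ x in Set.Ioc (0:ℝ) β, gfun α μ x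
      = α ^ (μ - 1) - ∫ x in Set.Ioi β, gfun α μ x := by
    have h := MeasureTheory.setIntegral_union (Set.Ioc_disjoint_Ioi le_rfl) measurableSet_Ioi
      ((gfun_integrableOn hα hμ).mono_set Set.Ioc_subset_Ioi_self)
      ((gfun_integrableOn hα hμ).mono_set (Set.Ioi_subset_Ioi hβ0)) (f := gfun α μ)
    rw [Set.Ioc_union_Ioi_eq_Ioi hβ0, gfun_integral hα hμ] at h
    linarith
  rw [hsub, hsplit, mul_sub, ← Real.rpow_add hα,
    show (1 - μ) + (μ - 1) = 0 by ring, Real.rpow_zero]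
  rw [marcumQ]
  rfl
end
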